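/- If Q is Lipschitz equicontinuous, has the shrinking property, and there exists x* ∈ K such that the sequence {Qⁿ(x*, ·) : n ≥ 1} is tight (for every ε > 0 there is a compact set C ⊆ K with Qⁿ(x*, C) ≥ 1 − ε for all n), then Q is weakly ergodic. -/

import Mathlib

open MeasureTheory ProbabilityTheory Filter Topology
open scoped ENNReal NNReal

/-- The oscillation of `u` over a set `E`: `sup {u x - u y : x, y ∈ E}`. -/
noncomputable def oscOn {K : Type*} (u : K → ℝ) (E : Set K) : ℝ :=
  sSup {d : ℝ | ∃ x ∈ E, ∃ y ∈ E, d = u x - u y}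

/-- The oscillation of `u` over the whole space. -/
noncomputable def osc {K : Type*} (u : K → ℝ) : ℝ :=
  oscOn u Set.univ

/-- The (smallest) Lipschitz constant `γ(u)` of `u`. -/
noncomputable def lipConst {K : Type*} [MetricSpace K] (u : K → ℝ) : ℝ :=
  sInf {c : ℝ | 0 ≤ c ∧ ∀ x y, |u x - u y| ≤ c * dist x y}

/-- `u ∈ Lip[K]`: `u` is bounded and Lipschitz continuous. -/
def MemLip {K : Type*} [MetricSpace K] (u : K → ℝ) : Prop :=
  (∃ C : ℝ, ∀ x, |u x| ≤ C) ∧ (∃ c : ℝ, 0 ≤ c ∧ ∀ x y, |u x - u y| ≤ c * dist x y)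

/-- `u ∈ Lip₁[K]`: `u` is bounded and Lipschitz with constant at most `1`. -/
def MemLip1 {K : Type*} [MetricSpace K] (u : K → ℝ) : Prop :=
  (∃ C : ℝ, ∀ x, |u x| ≤ C) ∧ ∀ x y, |u x - u y| ≤ dist x y

/-- Iterates of a Markov kernel: `kiter Q 0 = id`, `kiter Q (n+1) = Q ∘ₖ kiter Q n`, so that
`kiter Q n x = Qⁿ(x, ·)`. -/
noncomputable def kiter {K : Type*} [MeasurableSpace K] (Q : Kernel K K) : ℕ → Kernel K K
  | 0 => Kernel.id
  | n + 1 => Q ∘ₖ kiter Q n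

/-- The `n`-step transition operator `Tⁿu(x) = ∫_K u(y) Qⁿ(x, dy)`. -/
noncomputable def Tn {K : Type*} [MeasurableSpace K] (Q : Kernel K K) (n : ℕ)
    (u : K → ℝ) (x : K) : ℝ :=
  ∫ y, u y ∂(kiter Q n x)

/-- `Q` is Lipschitz equicontinuous: there is `C > 0` with `γ(Tⁿu) ≤ C γ(u)` for
all `n ≥ 1` and all bounded Lipschitz `u`. -/
def LipEquicont {K : Type*} [MetricSpace K] [MeasurableSpace K] (Q : Kernel K K) : Prop :=
  ∃ C : ℝ, 0 < C ∧ ∀ n : ℕ, 1 ≤ n → ∀ u : K → ℝ, MemLip u →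
    lipConst (Tn Q n u) ≤ C * lipConst u

/-- `Q` has the shrinking property. -/
def ShrinkingProperty {K : Type*} [MetricSpace K] [MeasurableSpace K] (Q : Kernel K K) : Prop :=
  ∀ ρ : ℝ, 0 < ρ → ∃ α : ℝ, 0 < α ∧ α < 1 ∧
    ∀ E : Set K, E.Nonempty → IsCompact E → ∀ η : ℝ, 0 < η → ∀ κ : ℝ, 0 < κ →
      ∃ N : ℕ, ∃ F : Set K, F.Nonempty ∧ IsCompact F ∧
        ∀ n : ℕ, N ≤ n → ∀ u : K → ℝ, MemLip u →
          oscOn (Tn Q n u) E ≤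
            η * lipConst u + κ * osc u + α * ρ * lipConst u
              + (1 - α) * oscOn (Tn Q (n - N) u) F

/-- `Q` has the strong shrinking property. -/
def StrongShrinkingProperty {K : Type*} [MetricSpace K] [MeasurableSpace K]
    (Q : Kernel K K) : Prop :=
  ∀ ρ : ℝ, 0 < ρ → ∃ α : ℝ, 0 < α ∧ α < 1 ∧ ∃ N : ℕ,
    ∀ n : ℕ, N ≤ n → ∀ u : K → ℝ, MemLip u →
      osc (Tn Q n u) ≤ α * ρ * lipConst u + (1 - α) * osc (Tn Q (n - N) u)

/-- `Q` is weakly contracting: for all `x, y`,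
`sup {∫ u dQⁿ(x,·) − ∫ u dQⁿ(y,·) : u ∈ Lip₁[K]} → 0`. -/
def WeaklyContracting {K : Type*} [MetricSpace K] [MeasurableSpace K] (Q : Kernel K K) : Prop :=
  ∀ x y : K,
    Filter.Tendsto
      (fun n : ℕ => sSup {d : ℝ | ∃ u : K → ℝ, MemLip1 u ∧ d = Tn Q n u x - Tn Q n u y})
      Filter.atTop (nhds 0)

/-- `Q` is weakly ergodic: weakly contracting, and there is a probability measure `π` with
`∫ u dQⁿ(x,·) → ∫ u dπ` for every bounded continuous `u` and every `x`. -/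
def WeaklyErgodic {K : Type*} [MetricSpace K] [MeasurableSpace K] (Q : Kernel K K) : Prop :=
  WeaklyContracting Q ∧
    ∃ π : Measure K, IsProbabilityMeasure π ∧
      ∀ u : K → ℝ, Continuous u → (∃ C : ℝ, ∀ x, |u x| ≤ C) →
        ∀ x : K, Filter.Tendsto (fun n : ℕ => Tn Q n u x) Filter.atTop (nhds (∫ y, u y ∂π))


/-! ### Auxiliary lemmas -/

section AuxOsc

variable {K : Type*}

lemma bddAbove_oscSet {u : K → ℝ} {C : ℝ} (hC : ∀ x, |u x| ≤ C) (E : Set K) :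
    BddAbove {d : ℝ | ∃ x ∈ E, ∃ y ∈ E, d = u x - u y} := by
  refine ⟨2 * C, fun d hd => ?_⟩
  obtain ⟨x, -, y, -, rfl⟩ := hd
  have h1 := (abs_le.mp (hC x)).2
  have h2 := (abs_le.mp (hC y)).1
  linarith

lemma sub_le_oscOn {u : K → ℝ} {C : ℝ} (hC : ∀ x, |u x| ≤ C) {E : Set K} {x y : K}
    (hx : x ∈ E) (hy : y ∈ E) : u x - u y ≤ oscOn u E :=
  le_csSup (bddAbove_oscSet hC E) ⟨x, hx, y, hy, rfl⟩

lemma oscOn_le {u : K → ℝ} {E : Set K} (hE : E.Nonempty) {B : ℝ}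
    (hB : ∀ x ∈ E, ∀ y ∈ E, u x - u y ≤ B) : oscOn u E ≤ B := by
  refine csSup_le ⟨0, hE.elim fun x hx => ⟨x, hx, x, hx, by ring⟩⟩ ?_
  rintro d ⟨x, hx, y, hy, rfl⟩
  exact hB x hx y hy

lemma oscOn_nonneg {u : K → ℝ} {C : ℝ} (hC : ∀ x, |u x| ≤ C) {E : Set K}
    (hE : E.Nonempty) : 0 ≤ oscOn u E := by
  obtain ⟨x, hx⟩ := hE
  have := sub_le_oscOn hC hx hx
  linarith

lemma sub_le_osc [Nonempty K] {u : K → ℝ} {C : ℝ} (hC : ∀ x, |u x| ≤ C) (x y : K) :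
    u x - u y ≤ osc u :=
  sub_le_oscOn hC (Set.mem_univ x) (Set.mem_univ y)

lemma osc_nonneg [Nonempty K] {u : K → ℝ} {C : ℝ} (hC : ∀ x, |u x| ≤ C) : 0 ≤ osc u :=
  oscOn_nonneg hC Set.univ_nonempty

lemma osc_le [Nonempty K] {u : K → ℝ} {B : ℝ} (hB : ∀ x y, u x - u y ≤ B) : osc u ≤ B :=
  oscOn_le Set.univ_nonempty (fun x _ y _ => hB x y)

end AuxOsc

section AuxLip

variable {K : Type*} [MetricSpace K]

lemma MemLip.exists_bound {u : K → ℝ} (h : MemLip u) : ∃ C : ℝ, 0 ≤ C ∧ ∀ x, |u x| ≤ C := by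
  obtain ⟨⟨C, hC⟩, -⟩ := h
  exact ⟨max C 0, le_max_right _ _, fun x => (hC x).trans (le_max_left _ _)⟩

lemma MemLip.continuous {u : K → ℝ} (h : MemLip u) : Continuous u := by
  obtain ⟨-, c, hc0, hc⟩ := h
  refine (LipschitzWith.of_dist_le_mul (K := ⟨c, hc0⟩) (fun x y => ?_)).continuous
  rw [Real.dist_eq]; exact hc x y

lemma memLip_const (c : ℝ) : MemLip (fun _ : K => c) :=
  ⟨⟨|c|, fun _ => le_refl _⟩, 0, le_refl 0, fun x y => by simp⟩

lemma MemLip.add {u v : K → ℝ} (hu : MemLip u) (hv : MemLip v) :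
    MemLip (fun x => u x + v x) := by
  obtain ⟨⟨C, hC⟩, c, hc0, hc⟩ := hu
  obtain ⟨⟨D, hD⟩, d, hd0, hd⟩ := hv
  refine ⟨⟨C + D, fun x => (abs_add_le _ _).trans (by gcongr <;> simp [hC, hD])⟩,
    c + d, by linarith, fun x y => ?_⟩
  have : u x + v x - (u y + v y) = (u x - u y) + (v x - v y) := by ring
  rw [this, add_mul]
  exact (abs_add_le _ _).trans (by gcongr <;> [exact hc x y; exact hd x y])

lemma MemLip.finsetSum {ι : Type*} (I : Finset ι) (g : ι → K → ℝ)
    (h : ∀ i ∈ I, MemLip (g i)) : MemLip (fun x => ∑ i ∈ I, g i x) := by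
  classical
  induction I using Finset.induction_on with
  | empty => simpa using memLip_const 0
  | insert _ _ hnot ih =>
      rename_i a s
      simp only [Finset.sum_insert hnot]
      exact (h a (Finset.mem_insert_self a s)).add
        (ih fun i hi => h i (Finset.mem_insert_of_mem hi))

lemma lipConst_nonneg (u : K → ℝ) : 0 ≤ lipConst u :=
  Real.sInf_nonneg (fun c hc => hc.1)

lemma lipConst_le {u : K → ℝ} {c : ℝ} (h0 : 0 ≤ c)
    (hc : ∀ x y, |u x - u y| ≤ c * dist x y) : lipConst u ≤ c :=
  csInf_le ⟨0, fun b hb => hb.1⟩ ⟨h0, hc⟩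

lemma lipConst_spec {u : K → ℝ} (h : MemLip u) (x y : K) :
    |u x - u y| ≤ lipConst u * dist x y := by
  obtain ⟨-, c, hc0, hc⟩ := h
  have hne : {c : ℝ | 0 ≤ c ∧ ∀ x y, |u x - u y| ≤ c * dist x y}.Nonempty := ⟨c, hc0, hc⟩
  rcases eq_or_lt_of_le (dist_nonneg (x := x) (y := y)) with hd | hd
  · have := hc x y
    rw [← hd] at this ⊢
    simpa using this
  · refine le_of_forall_pos_le_add fun ε hε => ?_
    obtain ⟨b, hb, hblt⟩ := Real.lt_sInf_add_pos hne (show 0 < ε / dist x y by positivity)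
    calc |u x - u y| ≤ b * dist x y := hb.2 x y
      _ ≤ (lipConst u + ε / dist x y) * dist x y := by
          exact mul_le_mul_of_nonneg_right hblt.le hd.le
      _ = lipConst u * dist x y + ε := by field_simp

lemma MemLip1.memLip {u : K → ℝ} (h : MemLip1 u) : MemLip u :=
  ⟨h.1, 1, zero_le_one, fun x y => by simpa using h.2 x y⟩

end AuxLip

section AuxTn

variable {K : Type*} [MetricSpace K] [MeasurableSpace K] [BorelSpace K]
variable (Q : Kernel K K) [IsMarkovKernel Q]

instance kiter_isMarkovKernel (n : ℕ) : IsMarkovKernel (kiter Q n) := by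
  induction n with
  | zero => rw [kiter]; infer_instance
  | succ n ih => rw [kiter]; infer_instance

lemma kiter_add (a b : ℕ) : kiter Q (a + b) = (kiter Q a).comp (kiter Q b) := by
  induction a with
  | zero => simp [kiter, Kernel.id_comp]
  | succ a ih =>
      have : a + 1 + b = (a + b) + 1 := by omega
      rw [this, kiter, ih, kiter, Kernel.comp_assoc]

lemma MemLip.integrable {u : K → ℝ} (h : MemLip u) (μ : Measure K) [IsFiniteMeasure μ] :
    Integrable u μ := by
  obtain ⟨C, hC0, hC⟩ := h.exists_bound
  exact (integrable_const C).mono' h.continuous.aestronglyMeasurable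
    (Filter.Eventually.of_forall fun x => by simpa [Real.norm_eq_abs] using hC x)

lemma integrable_of_bound {u : K → ℝ} (hm : Measurable u) {C : ℝ} (hC : ∀ x, |u x| ≤ C)
    (μ : Measure K) [IsFiniteMeasure μ] : Integrable u μ :=
  (integrable_const C).mono' hm.aestronglyMeasurable
    (Filter.Eventually.of_forall fun x => by simpa [Real.norm_eq_abs] using hC x)

lemma Tn_abs_le {u : K → ℝ} {C : ℝ} (hC : ∀ x, |u x| ≤ C) (n : ℕ) (x : K) :
    |Tn Q n u x| ≤ C := by
  have h := norm_integral_le_of_norm_le_const (μ := kiter Q n x) (C := C) (f := u)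
    (Filter.Eventually.of_forall fun y => by rw [Real.norm_eq_abs]; exact hC y)
  rw [Real.norm_eq_abs, probReal_univ, mul_one] at h
  exact h

lemma Tn_const (c : ℝ) (n : ℕ) (x : K) : Tn Q n (fun _ => c) x = c := by
  simp [Tn, measure_univ]

lemma Tn_add {u v : K → ℝ} (hu : MemLip u) (hv : MemLip v) (n : ℕ) (x : K) :
    Tn Q n (fun y => u y + v y) x = Tn Q n u x + Tn Q n v x :=
  integral_add (hu.integrable _) (hv.integrable _)

lemma Tn_mono {u v : K → ℝ} (hu : MemLip u) (hv : MemLip v) (huv : ∀ y, u y ≤ v y)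
    (n : ℕ) (x : K) : Tn Q n u x ≤ Tn Q n v x :=
  integral_mono (hu.integrable _) (hv.integrable _) huv

lemma Tn_zero (u : K → ℝ) (hu : MemLip u) (x : K) : Tn Q 0 u x = u x := by
  rw [Tn, kiter, Kernel.id_apply, integral_dirac' _ _ hu.continuous.stronglyMeasurable]

lemma Tn_repr {u : K → ℝ} {C : ℝ} (hC : ∀ x, |u x| ≤ C) (hm : Measurable u) (n : ℕ) (z : K) :
    Tn Q n u z = (∫⁻ y, ENNReal.ofReal (u y + C) ∂(kiter Q n z)).toReal - C := by
  have hint : Integrable u (kiter Q n z) := integrable_of_bound hm hC _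
  have h1 : ∫ y, (u y + C) ∂(kiter Q n z) = Tn Q n u z + C := by
    rw [Tn, integral_add hint (integrable_const _)]
    simp [measure_univ]
  have h2 : ∫ y, (u y + C) ∂(kiter Q n z)
      = (∫⁻ y, ENNReal.ofReal (u y + C) ∂(kiter Q n z)).toReal := by
    rw [integral_eq_lintegral_of_nonneg_ae (f := fun y => u y + C) (Filter.Eventually.of_forall fun y => by
        have := (abs_le.mp (hC y)).1
        simp only [Pi.zero_apply]; linarith)
      ((hm.add measurable_const).aestronglyMeasurable)]
  rw [h2] at h1
  linarith

lemma Tn_measurable {u : K → ℝ} (hu : MemLip u) (n : ℕ) : Measurable (Tn Q n u) := by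
  obtain ⟨C, hC0, hC⟩ := hu.exists_bound
  have hm := hu.continuous.measurable
  have hrepr : Tn Q n u = fun z => (∫⁻ y, ENNReal.ofReal (u y + C) ∂(kiter Q n z)).toReal - C :=
    funext (Tn_repr Q hC hm n)
  rw [hrepr]
  have hmeas : Measurable fun z => ∫⁻ y, ENNReal.ofReal (u y + C) ∂(kiter Q n z) :=
    Measurable.lintegral_kernel_prod_right' (κ := kiter Q n)
      (ENNReal.measurable_ofReal.comp ((hm.comp measurable_snd).add_const C))
  exact hmeas.ennreal_toReal.sub measurable_const

lemma Tn_comp {u : K → ℝ} (hu : MemLip u) (a b : ℕ) (x : K) :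
    Tn Q (a + b) u x = ∫ z, Tn Q a u z ∂(kiter Q b x) := by
  obtain ⟨C, hC0, hC⟩ := hu.exists_bound
  have hm := hu.continuous.measurable
  have hg : Measurable fun y => ENNReal.ofReal (u y + C) :=
    ENNReal.measurable_ofReal.comp (hm.add_const C)
  set φ : K → ℝ≥0∞ := fun z => ∫⁻ y, ENNReal.ofReal (u y + C) ∂(kiter Q a z) with hφ
  have hφm : Measurable φ :=
    Measurable.lintegral_kernel_prod_right' (κ := kiter Q a) (hg.comp measurable_snd)
  have hφbdd : ∀ z, φ z ≤ ENNReal.ofReal (2*C) := by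
    intro z
    calc φ z ≤ ∫⁻ _, ENNReal.ofReal (2*C) ∂(kiter Q a z) :=
          lintegral_mono fun y => ENNReal.ofReal_le_ofReal
            (by have := abs_le.mp (hC y); linarith)
      _ = ENNReal.ofReal (2*C) := by simp [measure_univ]
  have hLHS : Tn Q (a+b) u x = (∫⁻ z, φ z ∂(kiter Q b x)).toReal - C := by
    rw [Tn_repr Q hC hm (a+b) x, kiter_add Q a b, Kernel.comp_apply,
      Measure.lintegral_bind (Kernel.measurable _).aemeasurable hg.aemeasurable]
  have hint : Integrable (fun z => (φ z).toReal) (kiter Q b x) := by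
    refine integrable_of_bound hφm.ennreal_toReal (C := 2*C) (fun z => ?_) _
    rw [abs_of_nonneg ENNReal.toReal_nonneg]
    exact ENNReal.toReal_le_of_le_ofReal (by linarith) (hφbdd z)
  have hRHS : ∫ z, Tn Q a u z ∂(kiter Q b x) = (∫⁻ z, φ z ∂(kiter Q b x)).toReal - C := by
    have h1 : ∫ z, Tn Q a u z ∂(kiter Q b x)
        = ∫ z, ((φ z).toReal - C) ∂(kiter Q b x) := by
      congr 1
      exact funext fun z => Tn_repr Q hC hm a z
    rw [h1, integral_sub hint (integrable_const _)]
    congr 1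
    · exact integral_toReal hφm.aemeasurable (Filter.Eventually.of_forall fun z =>
        lt_of_le_of_lt (hφbdd z) ENNReal.ofReal_lt_top)
    · simp [measure_univ]
  rw [hLHS, hRHS]

lemma integral_sub_integral_le_osc [Nonempty K] {u : K → ℝ} (hu : MemLip u)
    (μ ν : Measure K) [IsProbabilityMeasure μ] [IsProbabilityMeasure ν] :
    ∫ y, u y ∂μ - ∫ y, u y ∂ν ≤ osc u := by
  obtain ⟨C, hC0, hC⟩ := hu.exists_bound
  have key : ∀ z, u z - ∫ y, u y ∂ν ≤ osc u := by
    intro z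
    have h1 : ∫ w, (u z - u w) ∂ν = u z - ∫ y, u y ∂ν := by
      rw [integral_sub (integrable_const _) (hu.integrable _)]
      simp [measure_univ]
    rw [← h1]
    calc ∫ w, (u z - u w) ∂ν ≤ ∫ _w, osc u ∂ν :=
          integral_mono ((integrable_const _).sub (hu.integrable _)) (integrable_const _)
            (fun w => sub_le_osc hC z w)
      _ = osc u := by simp [measure_univ]
  have h2 : ∫ z, (u z - ∫ y, u y ∂ν) ∂μ = ∫ y, u y ∂μ - ∫ y, u y ∂ν := by
    rw [integral_sub (hu.integrable _) (integrable_const _)]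
    simp [measure_univ]
  rw [← h2]
  calc ∫ z, (u z - ∫ y, u y ∂ν) ∂μ ≤ ∫ _z, osc u ∂μ :=
        integral_mono ((hu.integrable _).sub (integrable_const _)) (integrable_const _) key
    _ = osc u := by simp [measure_univ]

lemma Tn_sub_le_osc [Nonempty K] {u : K → ℝ} (hu : MemLip u) (n : ℕ) (x y : K) :
    Tn Q n u x - Tn Q n u y ≤ osc u :=
  integral_sub_integral_le_osc hu (kiter Q n x) (kiter Q n y)

end AuxTn

section AuxTest

variable {K : Type*} [MetricSpace K]

/-- test function: `1` on `A`, supported on the `δ`-thickening of `A`, `(1/δ)`-Lipschitz. -/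
noncomputable def testf (A : Set K) (δ : ℝ) : K → ℝ :=
  fun x => max (1 - Metric.infDist x A / δ) 0

lemma testf_nonneg (A : Set K) (δ : ℝ) (x : K) : 0 ≤ testf A δ x := le_max_right _ _

lemma testf_le_one (A : Set K) {δ : ℝ} (hδ : 0 < δ) (x : K) : testf A δ x ≤ 1 := by
  have h0 := Metric.infDist_nonneg (s := A) (x := x)
  have hd : 0 ≤ Metric.infDist x A / δ := div_nonneg h0 hδ.le
  exact max_le (by linarith) zero_le_one

lemma testf_eq_one_of_mem {A : Set K} {x : K} (hx : x ∈ A) (δ : ℝ) : testf A δ x = 1 := by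
  simp [testf, Metric.infDist_zero_of_mem hx]

lemma testf_memLip (A : Set K) {δ : ℝ} (hδ : 0 < δ) : MemLip (testf A δ) := by
  refine ⟨⟨1, fun x => abs_le.mpr ⟨by linarith [testf_nonneg A δ x], testf_le_one A hδ x⟩⟩,
    1/δ, by positivity, fun x y => ?_⟩
  have h1 : |(1 - Metric.infDist x A / δ) - (1 - Metric.infDist y A / δ)|
      ≤ (1/δ) * dist x y := by
    have h2 : |Metric.infDist x A - Metric.infDist y A| ≤ dist x y := by
      rw [abs_sub_le_iff]
      constructor
      · linarith [Metric.infDist_le_infDist_add_dist (x := x) (y := y) (s := A)]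
      · linarith [Metric.infDist_le_infDist_add_dist (x := y) (y := x) (s := A),
          dist_comm x y]
    have : (1 - Metric.infDist x A / δ) - (1 - Metric.infDist y A / δ)
        = -((Metric.infDist x A - Metric.infDist y A) / δ) := by ring
    rw [this, abs_neg, abs_div, abs_of_pos hδ, div_le_iff₀ hδ]
    calc |Metric.infDist x A - Metric.infDist y A| ≤ dist x y := h2
      _ = 1/δ * dist x y * δ := by field_simp
  exact (abs_max_sub_max_le_abs _ _ _).trans h1

lemma testf_mono_delta (A : Set K) {δ δ' : ℝ} (h : 0 < δ) (h' : δ ≤ δ') (x : K) :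
    testf A δ x ≤ testf A δ' x := by
  have h0 := Metric.infDist_nonneg (s := A) (x := x)
  rcases eq_or_lt_of_le h0 with h0' | h0'
  · simp [testf, ← h0']
  · have hd : Metric.infDist x A / δ' ≤ Metric.infDist x A / δ :=
      div_le_div_of_nonneg_left h0'.le h h'
    exact max_le_max (by linarith) le_rfl

lemma testf_mono_set {A B : Set K} (hA : A.Nonempty) (hAB : A ⊆ B) (δ : ℝ) (hδ : 0 < δ) (x : K) :
    testf A δ x ≤ testf B δ x := by
  have := Metric.infDist_le_infDist_of_subset hAB hA (x := x)
  exact max_le_max (by gcongr) (le_refl 0)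

lemma testf_eq_zero {A : Set K} {δ : ℝ} (hδ : 0 < δ) {x : K}
    (h : δ ≤ Metric.infDist x A) : testf A δ x = 0 := by
  have : 1 - Metric.infDist x A / δ ≤ 0 := by
    rw [sub_nonpos, le_div_iff₀ hδ, one_mul]; exact h
  simp [testf, max_eq_right this]

end AuxTest

section PiConstruction

variable {K : Type*} [MetricSpace K]

open scoped Classical in
/-- The premeasure used to construct the limit measure. -/
noncomputable def m0fun (L : (K → ℝ) → ℝ) (A : Set K) : ℝ≥0∞ :=
  if A.Nonempty then ⨅ (δ : ℝ) (_ : 0 < δ), ENNReal.ofReal (L (testf A δ)) else 0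

lemma m0fun_empty (L : (K → ℝ) → ℝ) : m0fun L (∅ : Set K) = 0 := by
  simp [m0fun]

lemma m0fun_le {L : (K → ℝ) → ℝ} {A : Set K} (hA : A.Nonempty) {δ : ℝ} (hδ : 0 < δ) :
    m0fun L A ≤ ENNReal.ofReal (L (testf A δ)) := by
  rw [m0fun, if_pos hA]
  exact iInf₂_le δ hδ

variable {L : (K → ℝ) → ℝ}
  (hLmono : ∀ u v : K → ℝ, MemLip u → MemLip v → (∀ y, u y ≤ v y) → L u ≤ L v)
  (hLadd : ∀ u v : K → ℝ, MemLip u → MemLip v →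
    L (fun x => u x + v x) = L u + L v)

include hLmono in
lemma m0fun_mono {A B : Set K} (hAB : A ⊆ B) : m0fun L A ≤ m0fun L B := by
  rcases Set.eq_empty_or_nonempty A with rfl | hA
  · simp [m0fun]
  have hB : B.Nonempty := hA.mono hAB
  rw [m0fun, if_pos hA, m0fun, if_pos hB]
  refine le_iInf₂ fun δ hδ => ?_
  refine (iInf₂_le δ hδ).trans (ENNReal.ofReal_le_ofReal ?_)
  exact hLmono _ _ (testf_memLip A hδ) (testf_memLip B hδ) (testf_mono_set hA hAB δ hδ)

include hLmono hLadd in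
lemma m0fun_superadd {A S T : Set K} {r : ℝ} (hr : 0 < r)
    (hsep : ∀ x ∈ S, ∀ y ∈ T, r ≤ dist x y) :
    m0fun L (A ∩ S) + m0fun L (A ∩ T) ≤ m0fun L A := by
  rcases Set.eq_empty_or_nonempty (A ∩ S) with hAS | hAS
  · rw [hAS, m0fun_empty, zero_add]
    exact m0fun_mono hLmono Set.inter_subset_left
  rcases Set.eq_empty_or_nonempty (A ∩ T) with hAT | hAT
  · rw [hAT, m0fun_empty, add_zero]
    exact m0fun_mono hLmono Set.inter_subset_left
  have hA : A.Nonempty := hAS.mono Set.inter_subset_left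
  have key : ∀ δ : ℝ, 0 < δ → 2 * δ ≤ r → ∀ x : K,
      testf (A ∩ S) δ x + testf (A ∩ T) δ x ≤ testf A δ x := by
    intro δ hδ hδr x
    rcases le_or_gt (testf (A ∩ S) δ x) 0 with h1 | h1
    · have h1' : testf (A ∩ S) δ x = 0 := le_antisymm h1 (testf_nonneg _ _ _)
      rw [h1', zero_add]
      exact testf_mono_set hAT Set.inter_subset_left δ hδ x
    rcases le_or_gt (testf (A ∩ T) δ x) 0 with h2 | h2
    · have h2' : testf (A ∩ T) δ x = 0 := le_antisymm h2 (testf_nonneg _ _ _)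
      rw [h2', add_zero]
      exact testf_mono_set hAS Set.inter_subset_left δ hδ x
    exfalso
    have hd1 : Metric.infDist x (A ∩ S) < δ := by
      by_contra hcon
      rw [testf_eq_zero hδ (not_lt.mp hcon)] at h1
      exact lt_irrefl _ h1
    have hd2 : Metric.infDist x (A ∩ T) < δ := by
      by_contra hcon
      rw [testf_eq_zero hδ (not_lt.mp hcon)] at h2
      exact lt_irrefl _ h2
    obtain ⟨s, hs, hds⟩ := (Metric.infDist_lt_iff hAS).mp hd1
    obtain ⟨t, ht, hdt⟩ := (Metric.infDist_lt_iff hAT).mp hd2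
    have := hsep s hs.2 t ht.2
    have := dist_triangle s x t
    rw [dist_comm s x] at this
    linarith
  rw [show m0fun L A = ⨅ (δ : ℝ) (_ : 0 < δ), ENNReal.ofReal (L (testf A δ)) from
    by rw [m0fun, if_pos hA]]
  refine le_iInf₂ fun δ hδ => ?_
  set δ' := min δ (r / 4) with hδ'def
  have hδ'pos : 0 < δ' := lt_min hδ (by linarith)
  have hδ'r : 2 * δ' ≤ r := by
    have : δ' ≤ r / 4 := min_le_right _ _
    linarith
  have h1 : m0fun L (A ∩ S) ≤ ENNReal.ofReal (L (testf (A ∩ S) δ')) := m0fun_le hAS hδ'pos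
  have h2 : m0fun L (A ∩ T) ≤ ENNReal.ofReal (L (testf (A ∩ T) δ')) := m0fun_le hAT hδ'pos
  have hL1 : (0:ℝ) ≤ L (testf (A ∩ S) δ') := by
    have := hLmono _ _ (memLip_const 0) (testf_memLip (A ∩ S) hδ'pos)
      (fun y => by simpa using testf_nonneg (A ∩ S) δ' y)
    have hc : L (fun _ : K => (0:ℝ)) = 0 := by
      have h0 := hLadd (fun _ => (0:ℝ)) (fun _ => (0:ℝ)) (memLip_const 0) (memLip_const 0)
      simp only [add_zero] at h0
      linarith
    linarith
  have hL2 : (0:ℝ) ≤ L (testf (A ∩ T) δ') := by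
    have := hLmono _ _ (memLip_const 0) (testf_memLip (A ∩ T) hδ'pos)
      (fun y => by simpa using testf_nonneg (A ∩ T) δ' y)
    have hc : L (fun _ : K => (0:ℝ)) = 0 := by
      have h0 := hLadd (fun _ => (0:ℝ)) (fun _ => (0:ℝ)) (memLip_const 0) (memLip_const 0)
      simp only [add_zero] at h0
      linarith
    linarith
  calc m0fun L (A ∩ S) + m0fun L (A ∩ T)
      ≤ ENNReal.ofReal (L (testf (A ∩ S) δ')) + ENNReal.ofReal (L (testf (A ∩ T) δ')) :=
        add_le_add h1 h2
    _ = ENNReal.ofReal (L (testf (A ∩ S) δ') + L (testf (A ∩ T) δ')) :=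
        (ENNReal.ofReal_add hL1 hL2).symm
    _ = ENNReal.ofReal (L (fun x => testf (A ∩ S) δ' x + testf (A ∩ T) δ' x)) := by
        rw [hLadd _ _ (testf_memLip _ hδ'pos) (testf_memLip _ hδ'pos)]
    _ ≤ ENNReal.ofReal (L (testf A δ')) := by
        apply ENNReal.ofReal_le_ofReal
        exact hLmono _ _ ((testf_memLip _ hδ'pos).add (testf_memLip _ hδ'pos))
          (testf_memLip _ hδ'pos) (key δ' hδ'pos hδ'r)
    _ ≤ ENNReal.ofReal (L (testf A δ)) := by
        apply ENNReal.ofReal_le_ofReal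
        exact hLmono _ _ (testf_memLip _ hδ'pos) (testf_memLip _ hδ)
          (testf_mono_delta A hδ'pos (min_le_left _ _))

include hLmono hLadd in
lemma m0fun_isMetric :
    (MeasureTheory.OuterMeasure.ofFunction (m0fun L) (m0fun_empty L)).IsMetric := by
  intro s t hst
  refine le_antisymm (measure_union_le s t) ?_
  obtain ⟨r, hr0, hr⟩ := hst
  have hrr : ∀ x ∈ s, ∀ y ∈ t, (min r 1).toReal ≤ dist x y := by
    intro x hx y hy
    have h1 : min r 1 ≤ edist x y := le_trans (min_le_left _ _) (hr x hx y hy)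
    have h2 := ENNReal.toReal_mono (edist_ne_top x y) h1
    rwa [dist_edist]
  have hrpos : 0 < (min r 1).toReal := by
    apply ENNReal.toReal_pos
    · exact (lt_min (pos_iff_ne_zero.mpr hr0) zero_lt_one).ne'
    · exact ne_top_of_le_ne_top ENNReal.one_ne_top (min_le_right _ _)
  rw [MeasureTheory.OuterMeasure.ofFunction_apply]
  refine le_iInf₂ fun f hf => ?_
  have hs : MeasureTheory.OuterMeasure.ofFunction (m0fun L) (m0fun_empty L) s
      ≤ ∑' i, m0fun L (f i ∩ s) := by
    rw [MeasureTheory.OuterMeasure.ofFunction_apply]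
    refine iInf₂_le (fun i => f i ∩ s) ?_
    intro x hx
    obtain ⟨i, hi⟩ := Set.mem_iUnion.mp (hf (Set.mem_union_left t hx))
    exact Set.mem_iUnion.mpr ⟨i, hi, hx⟩
  have ht : MeasureTheory.OuterMeasure.ofFunction (m0fun L) (m0fun_empty L) t
      ≤ ∑' i, m0fun L (f i ∩ t) := by
    rw [MeasureTheory.OuterMeasure.ofFunction_apply]
    refine iInf₂_le (fun i => f i ∩ t) ?_
    intro x hx
    obtain ⟨i, hi⟩ := Set.mem_iUnion.mp (hf (Set.mem_union_right s hx))
    exact Set.mem_iUnion.mpr ⟨i, hi, hx⟩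
  calc MeasureTheory.OuterMeasure.ofFunction (m0fun L) (m0fun_empty L) s
        + MeasureTheory.OuterMeasure.ofFunction (m0fun L) (m0fun_empty L) t
      ≤ (∑' i, m0fun L (f i ∩ s)) + ∑' i, m0fun L (f i ∩ t) := add_le_add hs ht
    _ = ∑' i, (m0fun L (f i ∩ s) + m0fun L (f i ∩ t)) := (ENNReal.tsum_add).symm
    _ ≤ ∑' i, m0fun L (f i) :=
        ENNReal.tsum_le_tsum fun i => m0fun_superadd hLmono hLadd hrpos hrr

end PiConstruction

section MainAux

variable {K : Type*} [MetricSpace K] [MeasurableSpace K] [BorelSpace K] [Nonempty K]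
variable (Q : Kernel K K) [IsMarkovKernel Q]

lemma lemB (hshrink : ShrinkingProperty Q) (E : Set K) (hEne : E.Nonempty)
    (hEcomp : IsCompact E) {ε : ℝ} (hε : 0 < ε) :
    ∃ M : ℕ, ∀ n, M ≤ n → ∀ u : K → ℝ, MemLip u →
      oscOn (Tn Q n u) E ≤ ε * (lipConst u + osc u) := by
  obtain ⟨α, hα0, hα1, hprop⟩ := hshrink (ε/2) (by linarith)
  have claim : ∀ k : ℕ, ∀ η : ℝ, 0 < η → ∀ E : Set K, E.Nonempty → IsCompact E →
      ∃ M : ℕ, ∀ n, M ≤ n → ∀ u : K → ℝ, MemLip u →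
        oscOn (Tn Q n u) E ≤ (k : ℝ) * η * lipConst u + (k : ℝ) * η * osc u
          + (ε/2) * lipConst u + (1-α)^k * osc u := by
    intro k
    induction k with
    | zero =>
      intro η hη E hEne hEc
      refine ⟨0, fun n hn u hu => ?_⟩
      obtain ⟨C, hC0, hC⟩ := hu.exists_bound
      have h1 : oscOn (Tn Q n u) E ≤ osc u :=
        oscOn_le hEne (fun x _ y _ => Tn_sub_le_osc Q hu n x y)
      have h2 : 0 ≤ lipConst u := lipConst_nonneg u
      simp only [pow_zero, Nat.cast_zero, zero_mul, zero_add, one_mul]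
      nlinarith
    | succ k ih =>
      intro η hη E hEne hEc
      obtain ⟨N, F, hFne, hFc, hshr⟩ := hprop E hEne hEc η hη η hη
      obtain ⟨M', hM'⟩ := ih η hη F hFne hFc
      refine ⟨N + M', fun n hn u hu => ?_⟩
      have hn1 : N ≤ n := le_trans (Nat.le_add_right _ _) hn
      have hn2 : M' ≤ n - N := by omega
      have h1 := hshr n hn1 u hu
      have h2 := hM' (n - N) hn2 u hu
      obtain ⟨C, hC0, hC⟩ := hu.exists_bound
      have hosc : 0 ≤ osc u := osc_nonneg hC
      have hlip : 0 ≤ lipConst u := lipConst_nonneg u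
      have h1α : (0:ℝ) ≤ 1 - α := by linarith
      have hαpow : (0:ℝ) ≤ (1-α)^k := pow_nonneg h1α k
      have h3 : (1-α) * oscOn (Tn Q (n - N) u) F
          ≤ (1-α) * ((k : ℝ) * η * lipConst u + (k : ℝ) * η * osc u
            + (ε/2) * lipConst u + (1-α)^k * osc u) :=
        mul_le_mul_of_nonneg_left h2 h1α
      have hkn : (0:ℝ) ≤ (k : ℝ) := Nat.cast_nonneg k
      have hpow1 : (1-α) * ((1-α)^k * osc u) = (1-α)^(k+1) * osc u := by ring
      push_cast
      nlinarith [mul_nonneg (mul_nonneg hkn hη.le) hlip,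
        mul_nonneg (mul_nonneg hkn hη.le) hosc,
        mul_nonneg (mul_nonneg hα0.le (by linarith : (0:ℝ) ≤ ε/2)) hlip]
  obtain ⟨k, hk⟩ := exists_pow_lt_of_lt_one (half_pos hε) (by linarith : 1 - α < 1)
  have hk1 : (0:ℝ) < (k:ℝ) + 1 := by positivity
  set η := ε / (2 * ((k:ℝ)+1)) with hηdef
  have hη : 0 < η := by rw [hηdef]; positivity
  obtain ⟨M, hM⟩ := claim k η hη E hEne hEcomp
  refine ⟨M, fun n hn u hu => ?_⟩
  have h := hM n hn u hu
  obtain ⟨C, hC0, hC⟩ := hu.exists_bound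
  have hosc : 0 ≤ osc u := osc_nonneg hC
  have hlip : 0 ≤ lipConst u := lipConst_nonneg u
  have hkη : (k:ℝ) * η ≤ ε/2 := by
    rw [hηdef, mul_div_assoc']
    rw [div_le_div_iff₀ (by positivity) (by norm_num : (0:ℝ) < 2)]
    nlinarith
  have hpow : (1-α)^k * osc u ≤ (ε/2) * osc u :=
    mul_le_mul_of_nonneg_right hk.le hosc
  nlinarith [mul_le_mul_of_nonneg_right hkη hlip, mul_le_mul_of_nonneg_right hkη hosc]

lemma exists_pi (x₀ : K)
    (htight : ∀ ε : ℝ, 0 < ε → ∃ C : Set K, IsCompact C ∧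
      ∀ n : ℕ, 1 ≤ n → 1 - ε ≤ ((kiter Q n x₀) C).toReal)
    (L : (K → ℝ) → ℝ)
    (hL : ∀ u, MemLip u → ∀ x, Filter.Tendsto (fun n => Tn Q n u x) Filter.atTop (nhds (L u))) :
    ∃ π : Measure K, IsProbabilityMeasure π ∧
      ∀ u : K → ℝ, Continuous u → (∃ C : ℝ, ∀ x, |u x| ≤ C) →
        ∀ x : K, Filter.Tendsto (fun n : ℕ => Tn Q n u x) Filter.atTop (nhds (∫ y, u y ∂π)) := by
  classical
  have hLconst : ∀ c : ℝ, L (fun _ : K => c) = c := by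
    intro c
    have h := hL _ (memLip_const c) x₀
    rw [show (fun n => Tn Q n (fun _ : K => c) x₀) = fun _ : ℕ => c from
      funext fun n => Tn_const Q c n x₀] at h
    exact tendsto_nhds_unique h tendsto_const_nhds
  have hLadd : ∀ u v : K → ℝ, MemLip u → MemLip v →
      L (fun x => u x + v x) = L u + L v := by
    intro u v hu hv
    have h1 := hL _ (hu.add hv) x₀
    have h2 := (hL u hu x₀).add (hL v hv x₀)
    rw [show (fun n => Tn Q n (fun y => u y + v y) x₀)
        = fun n => Tn Q n u x₀ + Tn Q n v x₀ from funext fun n => Tn_add Q hu hv n x₀] at h1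
    exact tendsto_nhds_unique h1 h2
  have hLmono : ∀ u v : K → ℝ, MemLip u → MemLip v → (∀ y, u y ≤ v y) → L u ≤ L v := by
    intro u v hu hv huv
    exact le_of_tendsto_of_tendsto (hL u hu x₀) (hL v hv x₀)
      (Filter.Eventually.of_forall fun n => Tn_mono Q hu hv huv n x₀)
  have hLnonneg : ∀ u : K → ℝ, MemLip u → (∀ y, 0 ≤ u y) → 0 ≤ L u := by
    intro u hu h0
    have := hLmono _ _ (memLip_const 0) hu h0
    rwa [hLconst 0] at this
  have hLle_one : ∀ u : K → ℝ, MemLip u → (∀ y, u y ≤ 1) → L u ≤ 1 := by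
    intro u hu h1
    have := hLmono _ _ hu (memLip_const 1) h1
    rwa [hLconst 1] at this
  have hLsum : ∀ (I : Finset ℕ) (g : ℕ → K → ℝ), (∀ i ∈ I, MemLip (g i)) →
      L (fun x => ∑ i ∈ I, g i x) = ∑ i ∈ I, L (g i) := by
    intro I
    induction I using Finset.induction_on with
    | empty => intro g _; simpa using hLconst 0
    | insert _ _ hnot ih =>
        rename_i a s
        intro g hg
        simp only [Finset.sum_insert hnot]
        rw [← ih g (fun i hi => hg i (Finset.mem_insert_of_mem hi)),
          ← hLadd _ _ (hg a (Finset.mem_insert_self a s))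
            (MemLip.finsetSum s g (fun i hi => hg i (Finset.mem_insert_of_mem hi)))]
  set mm := MeasureTheory.OuterMeasure.ofFunction (m0fun L) (m0fun_empty L) with hmmdef
  have hmetric := m0fun_isMetric hLmono hLadd
  have hcar : ‹MeasurableSpace K› ≤ mm.caratheodory := by
    rw [BorelSpace.measurable_eq (α := K)]
    exact hmetric.borel_le_caratheodory
  set π := mm.toMeasure hcar with hπdef
  have hπapp : ∀ {s : Set K}, MeasurableSet s → π s = mm s := by
    intro s hs
    rw [hπdef]
    exact MeasureTheory.toMeasure_apply mm hcar hs
  -- Key lemma: lower bound of mm on closed sets via tightness.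
  have key : ∀ E : Set K, IsClosed E → ∀ g : K → ℝ, MemLip g → (∀ x, 0 ≤ g x) →
      (∀ x, g x ≤ 1) → (∀ x, x ∉ E → g x = 0) → ENNReal.ofReal (L g) ≤ mm E := by
    intro E hE g hg hg0 hg1 hgsupp
    rw [hmmdef, MeasureTheory.OuterMeasure.ofFunction_apply]
    refine le_iInf₂ fun f hf => ?_
    by_cases htop : ∑' i, m0fun L (f i) = ⊤
    · rw [htop]; exact le_top
    have hfin : ∀ i, m0fun L (f i) ≠ ⊤ := fun i => ne_top_of_le_ne_top htop (ENNReal.le_tsum i)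
    set S : ℝ := (∑' i, m0fun L (f i)).toReal with hSdef
    have hLg1 : L g ≤ 1 := hLle_one g hg hg1
    suffices hsuff : L g ≤ S by
      calc ENNReal.ofReal (L g) ≤ ENNReal.ofReal S := ENNReal.ofReal_le_ofReal hsuff
        _ = ∑' i, m0fun L (f i) := ENNReal.ofReal_toReal htop
    refine le_of_forall_pos_le_add fun ε' hε' => ?_
    by_cases hcase : L g ≤ S
    · linarith
    push_neg at hcase
    have hS0 : 0 ≤ S := ENNReal.toReal_nonneg
    have hS1 : S ≤ 1 := by linarith
    set e := min ε' 1 with hedef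
    have he : 0 < e := lt_min hε' one_pos
    have he1 : e ≤ 1 := min_le_right _ _
    suffices h : L g ≤ S + e by
      have : e ≤ ε' := min_le_left _ _
      linarith
    set θ : ℝ := e/8 with hθdef
    have hθ : 0 < θ := by rw [hθdef]; linarith
    have hθ2 : θ ≤ 1/2 := by rw [hθdef]; linarith
    have hθ1 : (0:ℝ) < 1 - θ := by linarith
    have hch : ∀ i : ℕ, ∃ w : K → ℝ, MemLip w ∧ (∀ x, 0 ≤ w x) ∧ (∀ x, w x ≤ 1) ∧
        (∀ x ∈ f i, w x = 1) ∧ L w ≤ (m0fun L (f i)).toReal + (e/4) * (1/2)^(i+1) := by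
      intro i
      rcases Set.eq_empty_or_nonempty (f i) with hfi | hfi
      · refine ⟨fun _ => 0, memLip_const 0, fun x => le_refl 0, fun x => zero_le_one, ?_, ?_⟩
        · intro x hx; rw [hfi] at hx; exact absurd hx (Set.notMem_empty x)
        · rw [hLconst 0]; positivity
      · have hslack : (0:ℝ) < (e/4) * (1/2)^(i+1) := by positivity
        have hlt : m0fun L (f i) < m0fun L (f i) + ENNReal.ofReal ((e/4)*(1/2)^(i+1)) :=
          ENNReal.lt_add_right (hfin i) (by
            rw [ne_eq, ENNReal.ofReal_eq_zero]; linarith)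
        have hm0eq : m0fun L (f i) = ⨅ (δ : ℝ) (_ : 0 < δ), ENNReal.ofReal (L (testf (f i) δ)) := by
          rw [m0fun, if_pos hfi]
        rw [hm0eq] at hlt
        conv at hlt => rw [iInf_lt_iff]
        obtain ⟨δ, hδlt⟩ := hlt
        rw [iInf_lt_iff] at hδlt
        obtain ⟨hδ, hδlt⟩ := hδlt
        rw [← hm0eq] at hδlt
        refine ⟨testf (f i) δ, testf_memLip _ hδ, testf_nonneg _ _, testf_le_one _ hδ,
          fun x hx => testf_eq_one_of_mem hx δ, ?_⟩
        have h1 : (ENNReal.ofReal (L (testf (f i) δ))).toReal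
            ≤ (m0fun L (f i) + ENNReal.ofReal ((e/4)*(1/2)^(i+1))).toReal := by
          apply ENNReal.toReal_mono
          · exact ENNReal.add_ne_top.mpr ⟨hfin i, ENNReal.ofReal_ne_top⟩
          · exact hδlt.le
        rw [ENNReal.toReal_add (hfin i) ENNReal.ofReal_ne_top,
          ENNReal.toReal_ofReal hslack.le,
          ENNReal.toReal_ofReal (hLnonneg _ (testf_memLip _ hδ)
            (fun y => testf_nonneg _ _ _))] at h1
        exact h1
    choose w hwlip hw0 hw1 hwone hwL using hch
    obtain ⟨C, hCcomp, hCtight⟩ := htight (e/8) (by linarith)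
    have hEC : IsCompact (E ∩ C) := hCcomp.inter_left hE
    have hcover : E ∩ C ⊆ ⋃ i : ℕ, {x | 1 - θ < w i x} := by
      intro x hx
      obtain ⟨i, hi⟩ := Set.mem_iUnion.mp (hf hx.1)
      refine Set.mem_iUnion.mpr ⟨i, ?_⟩
      rw [Set.mem_setOf_eq, hwone i x hi]
      linarith
    obtain ⟨I, hI⟩ := hEC.elim_finite_subcover (fun i => {x | 1 - θ < w i x})
      (fun i => isOpen_lt continuous_const (hwlip i).continuous) hcover
    set v : K → ℝ := fun x => ∑ i ∈ I, w i x with hvdef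
    have hvlip : MemLip v := MemLip.finsetSum I w (fun i _ => hwlip i)
    have hvnn : ∀ x, 0 ≤ v x := fun x => Finset.sum_nonneg fun i _ => hw0 i x
    have hvge : ∀ x ∈ E ∩ C, 1 - θ ≤ v x := by
      intro x hx
      have := hI hx
      rw [Set.mem_iUnion₂] at this
      obtain ⟨i, hiI, hi⟩ := this
      rw [Set.mem_setOf_eq] at hi
      calc 1 - θ ≤ w i x := hi.le
        _ ≤ v x := Finset.single_le_sum (fun j _ => hw0 j x) hiI
    have hnineq : ∀ n : ℕ, 1 ≤ n → Tn Q n g x₀ ≤ (1-θ)⁻¹ * Tn Q n v x₀ + e/8 := by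
      intro n hn1
      set μ := kiter Q n x₀ with hμdef
      have hEmeas : MeasurableSet E := hE.measurableSet
      have hECmeas : MeasurableSet (E ∩ C) := hEmeas.inter hCcomp.isClosed.measurableSet
      have h1 : Tn Q n g x₀ ≤ (μ E).toReal := by
        have hle : ∀ y, g y ≤ Set.indicator E (fun _ => (1:ℝ)) y := by
          intro y
          by_cases hy : y ∈ E
          · rw [Set.indicator_of_mem hy]; exact hg1 y
          · rw [Set.indicator_of_notMem hy, hgsupp y hy]
        calc Tn Q n g x₀ ≤ ∫ y, Set.indicator E (fun _ => (1:ℝ)) y ∂μ :=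
              integral_mono (hg.integrable μ) ((integrable_const 1).indicator hEmeas) hle
          _ = (μ E).toReal := by
              rw [MeasureTheory.integral_indicator_const _ hEmeas]; simp; rfl
      have h2 : (μ E).toReal ≤ (μ (E ∩ C)).toReal + e/8 := by
        have hsub : E ⊆ (E ∩ C) ∪ Cᶜ := by
          intro y hy
          by_cases hyC : y ∈ C
          · exact Or.inl ⟨hy, hyC⟩
          · exact Or.inr hyC
        have hmle : μ E ≤ μ (E ∩ C) + μ Cᶜ := (measure_mono hsub).trans (measure_union_le _ _)
        have hcompl : (μ Cᶜ).toReal ≤ e/8 := by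
          have hadd : (μ C).toReal + (μ Cᶜ).toReal = 1 := by
            rw [← ENNReal.toReal_add (measure_ne_top μ C) (measure_ne_top μ Cᶜ),
              measure_add_measure_compl hCcomp.isClosed.measurableSet, measure_univ,
              ENNReal.toReal_one]
          have := hCtight n hn1
          rw [← hμdef] at this
          linarith
        calc (μ E).toReal ≤ (μ (E ∩ C) + μ Cᶜ).toReal := by
              apply ENNReal.toReal_mono _ hmle
              exact ENNReal.add_ne_top.mpr ⟨measure_ne_top _ _, measure_ne_top _ _⟩
          _ = (μ (E ∩ C)).toReal + (μ Cᶜ).toReal :=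
              ENNReal.toReal_add (measure_ne_top _ _) (measure_ne_top _ _)
          _ ≤ (μ (E ∩ C)).toReal + e/8 := by linarith
      have h3 : (1-θ) * (μ (E ∩ C)).toReal ≤ Tn Q n v x₀ := by
        have hle : ∀ y, Set.indicator (E ∩ C) (fun _ => (1-θ)) y ≤ v y := by
          intro y
          by_cases hy : y ∈ E ∩ C
          · rw [Set.indicator_of_mem hy]; exact hvge y hy
          · rw [Set.indicator_of_notMem hy]; exact hvnn y
        calc (1-θ) * (μ (E ∩ C)).toReal
            = ∫ y, Set.indicator (E ∩ C) (fun _ => (1-θ)) y ∂μ := by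
              rw [MeasureTheory.integral_indicator_const _ hECmeas, smul_eq_mul, measureReal_def]; ring
          _ ≤ Tn Q n v x₀ :=
              integral_mono ((integrable_const _).indicator hECmeas) (hvlip.integrable μ) hle
      have h4 : (μ (E ∩ C)).toReal ≤ (1-θ)⁻¹ * Tn Q n v x₀ := by
        have heq : (μ (E ∩ C)).toReal = (1-θ)⁻¹ * ((1-θ) * (μ (E ∩ C)).toReal) := by
          field_simp
        rw [heq]
        exact mul_le_mul_of_nonneg_left h3 (by positivity)
      linarith
    have hlim : L g ≤ (1-θ)⁻¹ * L v + e/8 := by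
      refine le_of_tendsto_of_tendsto (hL g hg x₀)
        (((hL v hvlip x₀).const_mul ((1-θ)⁻¹)).add_const (e/8)) ?_
      filter_upwards [eventually_ge_atTop 1] with n hn1 using hnineq n hn1
    have hLv : L v = ∑ i ∈ I, L (w i) := hLsum I w (fun i _ => hwlip i)
    have hsumbound : L v ≤ S + e/4 := by
      rw [hLv]
      have h1 : ∑ i ∈ I, L (w i)
          ≤ ∑ i ∈ I, ((m0fun L (f i)).toReal + (e/4)*(1/2)^(i+1)) :=
        Finset.sum_le_sum fun i _ => hwL i
      have h2 : ∑ i ∈ I, (m0fun L (f i)).toReal ≤ S := by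
        rw [hSdef, ← ENNReal.toReal_sum (fun i _ => hfin i)]
        exact ENNReal.toReal_mono htop (ENNReal.sum_le_tsum I)
      have h3 : ∑ i ∈ I, (e/4)*(1/2:ℝ)^(i+1) ≤ e/4 := by
        have hsummable : Summable (fun i : ℕ => (e/4)*(1/2:ℝ)^(i+1)) := by
          simp_rw [pow_succ]
          exact ((summable_geometric_two).mul_right _).mul_left _
        have hle := hsummable.sum_le_tsum I (fun i _ => by positivity)
        have heq : ∑' i : ℕ, (e/4)*(1/2:ℝ)^(i+1) = e/4 := by
          simp_rw [pow_succ, ← mul_assoc]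
          rw [tsum_mul_right, tsum_mul_left, tsum_geometric_two]
          ring
        rw [heq] at hle
        exact hle
      rw [Finset.sum_add_distrib] at h1
      linarith
    have hinv : (1-θ)⁻¹ ≤ 1 + 2*θ := by
      rw [inv_le_iff_one_le_mul₀ hθ1]
      nlinarith
    have hLvnn : 0 ≤ L v := hLnonneg v hvlip hvnn
    have hmul : (1-θ)⁻¹ * L v ≤ (1+2*θ) * (S + e/4) := by
      apply mul_le_mul hinv hsumbound hLvnn
      positivity
    have hfinal : (1+2*θ) * (S + e/4) + e/8 ≤ S + e := by
      rw [hθdef]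
      nlinarith
    linarith
  have hmmuniv : mm Set.univ = 1 := by
    refine le_antisymm ?_ ?_
    · refine le_trans (MeasureTheory.OuterMeasure.ofFunction_le _) ?_
      refine le_trans (m0fun_le Set.univ_nonempty one_pos) ?_
      rw [show testf (Set.univ : Set K) 1 = fun _ : K => (1:ℝ) from
        funext fun x => testf_eq_one_of_mem (Set.mem_univ x) 1]
      rw [hLconst 1]
      simp
    · have := key Set.univ isClosed_univ (fun _ => 1) (memLip_const 1)
        (fun _ => zero_le_one) (fun _ => le_refl 1) (fun x hx => absurd (Set.mem_univ x) hx)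
      rwa [hLconst 1, ENNReal.ofReal_one] at this
  have hπuniv : π Set.univ = 1 := by rw [hπapp MeasurableSet.univ]; exact hmmuniv
  haveI hπprob : IsProbabilityMeasure π := ⟨hπuniv⟩
  -- m0fun of a closed set is at most π of that set
  have hm0closed : ∀ F : Set K, IsClosed F → m0fun L F ≤ π F := by
    intro F hF
    rcases Set.eq_empty_or_nonempty F with rfl | hFne
    · rw [m0fun_empty]; exact zero_le
    have hstep : ∀ δ : ℝ, 0 < δ → m0fun L F ≤ π (Metric.cthickening δ F) := by
      intro δ hδ
      have hsupp : ∀ x, x ∉ Metric.cthickening δ F → testf F δ x = 0 := by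
        intro x hx
        apply testf_eq_zero hδ
        by_contra hcon
        push_neg at hcon
        obtain ⟨y, hy, hdy⟩ := (Metric.infDist_lt_iff hFne).mp hcon
        exact hx (Metric.thickening_subset_cthickening δ F
          (Metric.mem_thickening_iff.mpr ⟨y, hy, hdy⟩))
      have hkey := key (Metric.cthickening δ F) Metric.isClosed_cthickening (testf F δ)
        (testf_memLip F hδ) (testf_nonneg F δ) (testf_le_one F hδ) hsupp
      rw [← hπapp Metric.isClosed_cthickening.measurableSet] at hkey
      exact le_trans (m0fun_le hFne hδ) hkey
    have htends := tendsto_measure_cthickening_of_isClosed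
      (μ := π) (s := F) ⟨1, one_pos, measure_ne_top π _⟩ hF
    refine ENNReal.le_of_forall_pos_le_add fun ε hε hπF => ?_
    have hlt : π F < π F + ε :=
      ENNReal.lt_add_right (measure_ne_top π F) (by
        simpa using hε.ne')
    have hev : ∀ᶠ δ in nhds (0:ℝ),
        π (Metric.cthickening δ F) ≤ π F + ε := htends.eventually_le_const hlt
    rw [Metric.eventually_nhds_iff] at hev
    obtain ⟨η, hη, hball⟩ := hev
    refine (hstep (η/2) (by linarith)).trans (hball ?_)
    rw [Real.dist_eq]
    rw [abs_of_pos (by linarith : (0:ℝ) < η/2 - 0)]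
    linarith
  -- limsup of iterates on closed sets
  have hlimsup : ∀ (x : K) (F : Set K), IsClosed F →
      Filter.atTop.limsup (fun n => (kiter Q n x) F) ≤ π F := by
    intro x F hF
    rcases Set.eq_empty_or_nonempty F with rfl | hFne
    · simp [Filter.limsup_const]
    refine le_trans ?_ (hm0closed F hF)
    have hm0eq : m0fun L F = ⨅ (δ : ℝ) (_ : 0 < δ), ENNReal.ofReal (L (testf F δ)) := by
      rw [m0fun, if_pos hFne]
    rw [hm0eq]
    refine le_iInf₂ fun δ hδ => ?_
    have hbound : ∀ n : ℕ, (kiter Q n x) F ≤ ENNReal.ofReal (Tn Q n (testf F δ) x) := by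
      intro n
      have h1 : ((kiter Q n x) F).toReal ≤ Tn Q n (testf F δ) x := by
        have hle : ∀ y, Set.indicator F (fun _ => (1:ℝ)) y ≤ testf F δ y := by
          intro y
          by_cases hy : y ∈ F
          · rw [Set.indicator_of_mem hy]; exact (testf_eq_one_of_mem hy δ).ge
          · rw [Set.indicator_of_notMem hy]; exact testf_nonneg F δ y
        calc ((kiter Q n x) F).toReal
            = ∫ y, Set.indicator F (fun _ => (1:ℝ)) y ∂(kiter Q n x) := by
              rw [MeasureTheory.integral_indicator_const _ hF.measurableSet]; simp; rfl
          _ ≤ Tn Q n (testf F δ) x :=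
              integral_mono ((integrable_const 1).indicator hF.measurableSet)
                ((testf_memLip F hδ).integrable _) hle
      calc (kiter Q n x) F = ENNReal.ofReal ((kiter Q n x) F).toReal :=
            (ENNReal.ofReal_toReal (measure_ne_top _ _)).symm
        _ ≤ ENNReal.ofReal (Tn Q n (testf F δ) x) := ENNReal.ofReal_le_ofReal h1
    have hlim2 : Filter.Tendsto (fun n => ENNReal.ofReal (Tn Q n (testf F δ) x))
        Filter.atTop (nhds (ENNReal.ofReal (L (testf F δ)))) :=
      (ENNReal.continuous_ofReal.tendsto _).comp (hL _ (testf_memLip F hδ) x)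
    calc Filter.atTop.limsup (fun n => (kiter Q n x) F)
        ≤ Filter.atTop.limsup (fun n => ENNReal.ofReal (Tn Q n (testf F δ) x)) :=
          Filter.limsup_le_limsup (Filter.Eventually.of_forall hbound)
      _ = ENNReal.ofReal (L (testf F δ)) := hlim2.limsup_eq
  have hopen : ∀ (x : K) (G : Set K), IsOpen G →
      π G ≤ Filter.atTop.liminf (fun n => (kiter Q n x) G) := by
    intro x G hG
    have hcompl : Filter.atTop.limsup (fun n => (kiter Q n x) Gᶜ) ≤ π Gᶜ :=
      hlimsup x Gᶜ (isClosed_compl_iff.mpr hG)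
    exact MeasureTheory.le_measure_liminf_of_limsup_measure_compl_le hG.measurableSet hcompl
  refine ⟨π, hπprob, ?_⟩
  intro u hu hubdd x
  set μs : ℕ → MeasureTheory.ProbabilityMeasure K := fun n => ⟨kiter Q n x, inferInstance⟩
    with hμsdef
  set πP : MeasureTheory.ProbabilityMeasure K := ⟨π, hπprob⟩ with hπPdef
  have h_opens : ∀ G, IsOpen G → πP G ≤ Filter.atTop.liminf (fun n => μs n G) := by
    intro G hG
    have hENN := hopen x G hG
    have haux : (ENNReal.ofNNReal (Filter.atTop.liminf fun n => μs n G))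
        = Filter.atTop.liminf (fun n => ((μs n G : ℝ≥0) : ℝ≥0∞)) := by
      refine Monotone.map_liminf_of_continuousAt (F := Filter.atTop) ENNReal.coe_mono
        (fun n => μs n G) ?_ ?_ ?_
      · exact ENNReal.continuous_coe.continuousAt
      · exact Filter.IsBoundedUnder.isCoboundedUnder_ge ⟨1, by simp⟩
      · exact ⟨0, by simp⟩
    rw [← ENNReal.coe_le_coe, haux]
    have h2 : (fun n => ((μs n G : ℝ≥0) : ℝ≥0∞)) = fun n => (kiter Q n x) G := by
      funext n
      exact (μs n).ennreal_coeFn_eq_coeFn_toMeasure G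
    have h1 : ((πP G : ℝ≥0) : ℝ≥0∞) = π G := πP.ennreal_coeFn_eq_coeFn_toMeasure G
    rw [h2, h1]
    exact hENN
  have htend : Filter.Tendsto μs Filter.atTop (nhds πP) :=
    MeasureTheory.tendsto_of_forall_isOpen_le_liminf h_opens
  obtain ⟨Cu, hCu⟩ := hubdd
  set f : BoundedContinuousFunction K ℝ :=
    BoundedContinuousFunction.ofNormedAddCommGroup u hu Cu
      (fun y => by rw [Real.norm_eq_abs]; exact hCu y) with hfdef
  have hconv := MeasureTheory.ProbabilityMeasure.tendsto_iff_forall_integral_tendsto.mp htend f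
  have hfcoe : ∀ y, f y = u y := fun y => rfl
  simp only [hfcoe] at hconv
  exact hconv

end MainAux

/-- If `Q` is Lipschitz equicontinuous, has the shrinking property, and there is
`x*` such that `{Qⁿ(x*, ·) : n ≥ 1}` is tight, then `Q` is weakly ergodic. -/
theorem stmt_3 {K : Type*} [MetricSpace K] [CompleteSpace K]
    [TopologicalSpace.SeparableSpace K] [MeasurableSpace K] [BorelSpace K]
    (hbdd : Bornology.IsBounded (Set.univ : Set K))
    (Q : Kernel K K) [IsMarkovKernel Q]
    (hlip : LipEquicont Q) (hshrink : ShrinkingProperty Q)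
    (x₀ : K)
    (htight : ∀ ε : ℝ, 0 < ε → ∃ C : Set K, IsCompact C ∧
      ∀ n : ℕ, 1 ≤ n → 1 - ε ≤ ((kiter Q n x₀) C).toReal) :
    WeaklyErgodic Q := by
  haveI : Nonempty K := ⟨x₀⟩
  obtain ⟨D, hD⟩ := Metric.isBounded_iff.mp hbdd
  have hD0 : 0 ≤ D := le_trans dist_nonneg (hD (Set.mem_univ x₀) (Set.mem_univ x₀))
  -- Part 1: weak contraction
  have hWC : WeaklyContracting Q := by
    intro x y
    rw [Metric.tendsto_atTop]
    intro ε hε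
    have hpairne : ({x, y} : Set K).Nonempty := ⟨x, Set.mem_insert x {y}⟩
    have hpairc : IsCompact ({x, y} : Set K) :=
      ((Set.finite_singleton y).insert x).isCompact
    have hε' : 0 < ε / (2 * (1 + D) + 1) := by positivity
    obtain ⟨M, hM⟩ := lemB Q hshrink {x, y} hpairne hpairc hε'
    refine ⟨M, fun n hn => ?_⟩
    set Sn := {d : ℝ | ∃ u : K → ℝ, MemLip1 u ∧ d = Tn Q n u x - Tn Q n u y} with hSndef
    have h0mem : (0:ℝ) ∈ Sn := by
      refine ⟨fun _ => 0, ⟨⟨0, fun z => by simp⟩, fun a b => by simpa using dist_nonneg⟩, ?_⟩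
      rw [Tn_const Q 0 n x, Tn_const Q 0 n y]; ring
    have hub : ∀ d ∈ Sn, d ≤ (ε / (2 * (1 + D) + 1)) * (1 + D) := by
      rintro d ⟨u, hu1, rfl⟩
      have hu : MemLip u := hu1.memLip
      obtain ⟨Cu, hCu0, hCu⟩ := hu.exists_bound
      have hlip1 : lipConst u ≤ 1 := lipConst_le zero_le_one
        (fun a b => by simpa using hu1.2 a b)
      have hoscD : osc u ≤ D := osc_le (fun a b =>
        le_trans (le_abs_self _) ((hu1.2 a b).trans (hD (Set.mem_univ a) (Set.mem_univ b))))
      have hbd := hM n hn u hu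
      have hTb : ∀ z, |Tn Q n u z| ≤ Cu := fun z => Tn_abs_le Q hCu n z
      have hd : Tn Q n u x - Tn Q n u y ≤ oscOn (Tn Q n u) {x, y} :=
        sub_le_oscOn hTb (Set.mem_insert x {y}) (Set.mem_insert_of_mem x rfl)
      have hlip0 : 0 ≤ lipConst u := lipConst_nonneg u
      have hosc0 : 0 ≤ osc u := osc_nonneg hCu
      calc Tn Q n u x - Tn Q n u y ≤ oscOn (Tn Q n u) {x, y} := hd
        _ ≤ (ε / (2 * (1 + D) + 1)) * (lipConst u + osc u) := hbd
        _ ≤ (ε / (2 * (1 + D) + 1)) * (1 + D) := by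
            apply mul_le_mul_of_nonneg_left _ hε'.le
            linarith
    have hbddS : BddAbove Sn := ⟨(ε / (2 * (1 + D) + 1)) * (1 + D), hub⟩
    have hup : sSup Sn ≤ (ε / (2 * (1 + D) + 1)) * (1 + D) := csSup_le ⟨0, h0mem⟩ hub
    have hlo : 0 ≤ sSup Sn := le_csSup hbddS h0mem
    rw [Real.dist_eq, sub_zero, abs_of_nonneg hlo]
    have hlt : (ε / (2 * (1 + D) + 1)) * (1 + D) < ε := by
      rw [div_mul_eq_mul_div, div_lt_iff₀ (by positivity)]
      nlinarith
    linarith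
  -- Part 2: existence of the limit functional
  have hex : ∀ u : K → ℝ, ∃ ℓ : ℝ, MemLip u →
      ∀ x, Filter.Tendsto (fun n => Tn Q n u x) Filter.atTop (nhds ℓ) := by
    intro u
    by_cases hu : MemLip u
    swap
    · exact ⟨0, fun h => absurd h hu⟩
    obtain ⟨Cu, hCu0, hCu⟩ := hu.exists_bound
    have hlip0 : 0 ≤ lipConst u := lipConst_nonneg u
    have hosc0 : 0 ≤ osc u := osc_nonneg hCu
    have hcauchy : CauchySeq (fun n => Tn Q n u x₀) := by
      rw [Metric.cauchySeq_iff']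
      intro ε hε
      set εt := min (1/2) (ε/(16*(Cu+1))) with hεtdef
      have hεt0 : 0 < εt := lt_min (by norm_num) (by positivity)
      have hεt2 : εt ≤ 1/2 := min_le_left _ _
      have hεt3 : εt ≤ ε/(16*(Cu+1)) := min_le_right _ _
      obtain ⟨Cs, hCscomp, hCstight⟩ := htight εt hεt0
      have hCsne : Cs.Nonempty := by
        by_contra hemp
        rw [Set.not_nonempty_iff_eq_empty] at hemp
        have h1 := hCstight 1 le_rfl
        rw [hemp] at h1
        simp only [measure_empty, ENNReal.toReal_zero] at h1
        linarith
      have hεB : 0 < ε/(8*(lipConst u + osc u + 1)) := by positivity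
      obtain ⟨M, hM⟩ := lemB Q hshrink Cs hCsne hCscomp hεB
      obtain ⟨c₀, hc₀⟩ := hCsne
      set w : K → ℝ := Tn Q M u with hwdef
      have hwbound : ∀ z, |w z| ≤ Cu := fun z => Tn_abs_le Q hCu M z
      have hwmeas : Measurable w := Tn_measurable Q hu M
      have hoscw0 : 0 ≤ oscOn w Cs := oscOn_nonneg hwbound ⟨c₀, hc₀⟩
      have hoscw : oscOn w Cs ≤ ε/8 := by
        have h1 := hM M le_rfl u hu
        calc oscOn w Cs ≤ (ε/(8*(lipConst u + osc u + 1))) * (lipConst u + osc u) := h1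
          _ ≤ ε/8 := by
              rw [div_mul_eq_mul_div, div_le_div_iff₀ (by positivity) (by norm_num)]
              nlinarith
      have hkey : ∀ j : ℕ, 1 ≤ j → |Tn Q (M + j) u x₀ - w c₀| ≤ ε/8 + 2*Cu*εt := by
        intro j hj
        have hrepr : Tn Q (M + j) u x₀ = ∫ z, w z ∂(kiter Q j x₀) := Tn_comp Q hu M j x₀
        set μ := kiter Q j x₀ with hμdef
        have hint : Integrable w μ := integrable_of_bound hwmeas hwbound μ
        have hCsmeas : MeasurableSet Cs := hCscomp.isClosed.measurableSet
        have hintind : Integrable (fun z =>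
            oscOn w Cs + Set.indicator Csᶜ (fun _ => 2*Cu) z) μ :=
          (integrable_const _).add ((integrable_const _).indicator hCsmeas.compl)
        have h2 : ∀ z, |w z - w c₀| ≤ oscOn w Cs + Set.indicator Csᶜ (fun _ => 2*Cu) z := by
          intro z
          by_cases hz : z ∈ Cs
          · rw [Set.indicator_of_notMem (by simpa using hz), add_zero]
            exact abs_sub_le_iff.mpr ⟨sub_le_oscOn hwbound hz hc₀, sub_le_oscOn hwbound hc₀ hz⟩
          · rw [Set.indicator_of_mem (by simpa using hz)]
            have h3 := abs_sub (w z) (w c₀)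
            have := hwbound z
            have := hwbound c₀
            calc |w z - w c₀| ≤ |w z| + |w c₀| := abs_sub _ _
              _ ≤ 2*Cu := by linarith
              _ ≤ oscOn w Cs + 2*Cu := by linarith
        have h4 : (μ Csᶜ).toReal ≤ εt := by
          have hadd : (μ Cs).toReal + (μ Csᶜ).toReal = 1 := by
            rw [← ENNReal.toReal_add (measure_ne_top μ Cs) (measure_ne_top μ Csᶜ),
              measure_add_measure_compl hCsmeas, measure_univ, ENNReal.toReal_one]
          have h5 := hCstight j hj
          rw [← hμdef] at h5
          linarith
        have h6 : ∫ z, (oscOn w Cs + Set.indicator Csᶜ (fun _ => 2*Cu) z) ∂μ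
            = oscOn w Cs + 2*Cu*(μ Csᶜ).toReal := by
          rw [integral_add (integrable_const _) ((integrable_const _).indicator hCsmeas.compl),
            MeasureTheory.integral_indicator_const _ hCsmeas.compl]
          simp [measure_univ, smul_eq_mul, measureReal_def]
          ring
        have h7 : |∫ z, w z ∂μ - w c₀| ≤ ∫ z, |w z - w c₀| ∂μ := by
          have heq : ∫ z, w z ∂μ - w c₀ = ∫ z, (w z - w c₀) ∂μ := by
            rw [integral_sub hint (integrable_const _)]
            simp [measure_univ]
          rw [heq]
          simpa [Real.norm_eq_abs] using
            norm_integral_le_integral_norm (μ := μ) (fun z => w z - w c₀)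
        have h8 : ∫ z, |w z - w c₀| ∂μ
            ≤ ∫ z, (oscOn w Cs + Set.indicator Csᶜ (fun _ => 2*Cu) z) ∂μ :=
          integral_mono (hint.sub (integrable_const _)).abs hintind h2
        rw [hrepr]
        calc |∫ z, w z ∂μ - w c₀| ≤ oscOn w Cs + 2*Cu*(μ Csᶜ).toReal := by
              rw [← h6]; exact h7.trans h8
          _ ≤ ε/8 + 2*Cu*εt := by nlinarith
      refine ⟨M + 1, fun n hn => ?_⟩
      have hn1 : 1 ≤ n - M := by omega
      have e1 := hkey (n - M) hn1
      have e2 := hkey 1 le_rfl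
      have heq1 : M + (n - M) = n := by omega
      rw [heq1] at e1
      rw [Real.dist_eq]
      have hbnd : ε/8 + 2*Cu*εt + (ε/8 + 2*Cu*εt) < ε := by
        have ha : 4*Cu*εt ≤ 4*Cu*(ε/(16*(Cu+1))) :=
          mul_le_mul_of_nonneg_left hεt3 (by linarith)
        have hb : 4*Cu*(ε/(16*(Cu+1))) ≤ ε/4 := by
          rw [← mul_div_assoc, div_le_div_iff₀ (by positivity) (by norm_num)]
          nlinarith
        linarith
      calc |Tn Q n u x₀ - Tn Q (M + 1) u x₀|
          ≤ |Tn Q n u x₀ - w c₀| + |Tn Q (M + 1) u x₀ - w c₀| := by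
            have := abs_sub_le (Tn Q n u x₀) (w c₀) (Tn Q (M + 1) u x₀)
            rwa [abs_sub_comm (w c₀) (Tn Q (M + 1) u x₀)] at this
        _ ≤ (ε/8 + 2*Cu*εt) + (ε/8 + 2*Cu*εt) := add_le_add e1 e2
        _ < ε := hbnd
    obtain ⟨ℓ, hℓ⟩ := cauchySeq_tendsto_of_complete hcauchy
    refine ⟨ℓ, fun _ x => ?_⟩
    have hdiff : Filter.Tendsto (fun n => Tn Q n u x - Tn Q n u x₀) Filter.atTop (nhds 0) := by
      rw [Metric.tendsto_atTop]
      intro ε hε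
      have hpairne : ({x, x₀} : Set K).Nonempty := ⟨x, Set.mem_insert x {x₀}⟩
      have hpairc : IsCompact ({x, x₀} : Set K) :=
        ((Set.finite_singleton x₀).insert x).isCompact
      have hεB : 0 < ε/(2*(lipConst u + osc u + 1)) := by positivity
      obtain ⟨M, hM⟩ := lemB Q hshrink {x, x₀} hpairne hpairc hεB
      refine ⟨M, fun n hn => ?_⟩
      have hbd := hM n hn u hu
      have hTb : ∀ z, |Tn Q n u z| ≤ Cu := fun z => Tn_abs_le Q hCu n z
      have h1 : Tn Q n u x - Tn Q n u x₀ ≤ oscOn (Tn Q n u) {x, x₀} :=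
        sub_le_oscOn hTb (Set.mem_insert x {x₀}) (Set.mem_insert_of_mem x rfl)
      have h2 : Tn Q n u x₀ - Tn Q n u x ≤ oscOn (Tn Q n u) {x, x₀} :=
        sub_le_oscOn hTb (Set.mem_insert_of_mem x rfl) (Set.mem_insert x {x₀})
      rw [Real.dist_eq, sub_zero]
      have habs : |Tn Q n u x - Tn Q n u x₀| ≤ oscOn (Tn Q n u) {x, x₀} :=
        abs_sub_le_iff.mpr ⟨h1, h2⟩
      calc |Tn Q n u x - Tn Q n u x₀|
          ≤ oscOn (Tn Q n u) {x, x₀} := habs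
        _ ≤ (ε/(2*(lipConst u + osc u + 1))) * (lipConst u + osc u) := hbd
        _ < ε := by
            rw [div_mul_eq_mul_div, div_lt_iff₀ (by positivity)]
            nlinarith
    have hsum := hℓ.add hdiff
    rw [add_zero] at hsum
    have heq : (fun n => Tn Q n u x₀ + (Tn Q n u x - Tn Q n u x₀))
        = fun n => Tn Q n u x := by
      funext n; ring
    rwa [heq] at hsum
  choose L hL using hex
  obtain ⟨π, hπprob, hπconv⟩ := exists_pi Q x₀ htight L (fun u hu x => hL u hu x)
  exact ⟨hWC, π, hπprob, fun u hu hub x => hπconv u hu hub x⟩
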